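/- Let R be a commutative ring with identity, let k ≥ 1, and let c₁,…,c_k ∈ R, and set c_m = 0 for m ≥ k+1. For n ≥ 1, the n-th coefficient b_n of the inverse power series (1 − Σ_{i=1}^{k} c_iX^i)^{-1} ∈ R⟦X⟧ satisfies b_n = (−1)^n det M, where M is the n×n matrix with entries M_{i,j} = −c_{j−i+1} for j ≥ i, M_{i,j} = 1 for j = i−1, and M_{i,j} = 0 for j < i−1 (upper Hessenberg matrix with first row (−c₁, −c₂, …, −c_n), entries 1 on the subdiagonal, and constant values −c_{j−i+1} along each diagonal above it). -/

import Mathlib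

section Hess

variable {R : Type*} [CommRing R]

private def hess (c : ℕ → R) (d n : ℕ) : Matrix (Fin n) (Fin n) R :=
  Matrix.of fun i j => if (i : ℕ) = 0 then -c ((j : ℕ) + 1 + d)
    else if (i : ℕ) ≤ (j : ℕ) then -c ((j : ℕ) - i + 1)
    else if (j : ℕ) + 1 = (i : ℕ) then 1 else 0

private theorem hess_rec (c : ℕ → R) (d n : ℕ) :
    (hess c d (n+2)).det = -c (1+d) * (hess c 0 (n+1)).det - (hess c (d+1) (n+1)).det := by
  have hc' : ∀ a b : ℕ, a = b → -c a = -c b := fun a b h => by rw [h]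
  rw [Matrix.det_succ_column_zero]
  rw [Fin.sum_univ_succ, Fin.sum_univ_succ]
  have hz : ∀ i : Fin n, hess c d (n+2) i.succ.succ 0 = 0 := by
    intro i
    simp only [hess, Matrix.of_apply, Fin.val_succ, Fin.val_zero]
    split_ifs <;> first | rfl | omega | exact ‹False›.elim
  have e00 : hess c d (n+2) 0 0 = -c (1+d) := by
    simp only [hess, Matrix.of_apply, Fin.val_zero]
    split_ifs <;> first | (exact hc' _ _ (by omega)) | exact ‹False›.elim
  have e10 : hess c d (n+2) (Fin.succ 0) 0 = 1 := by
    simp only [hess, Matrix.of_apply, Fin.val_succ, Fin.val_zero]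
    split_ifs <;> first | rfl | omega | exact ‹False›.elim
  have s0 : (hess c d (n+2)).submatrix (Fin.succAbove 0) Fin.succ = hess c 0 (n+1) := by
    ext i j
    simp only [hess, Matrix.submatrix_apply, Matrix.of_apply, Fin.succAbove_zero, Fin.val_succ]
    split_ifs
    all_goals first
    | rfl
    | omega
    | exact ‹False›.elim
    | exact hc' _ _ (by omega)
  have s1 : (hess c d (n+2)).submatrix (Fin.succ 0).succAbove Fin.succ
      = hess c (d+1) (n+1) := by
    ext i j
    have hv : (((Fin.succ 0 : Fin (n+2)).succAbove i : Fin (n+2)) : ℕ)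
        = if (i : ℕ) = 0 then 0 else (i : ℕ) + 1 := by
      rcases Nat.eq_zero_or_pos (i : ℕ) with h | h
      · rw [Fin.succAbove_of_castSucc_lt, if_pos h]
        · simp only [Fin.coe_castSucc, h]
        · rw [Fin.lt_def]; simp only [Fin.coe_castSucc, Fin.val_succ, Fin.val_zero]; omega
      · rw [Fin.succAbove_of_le_castSucc, if_neg (by omega)]
        · simp only [Fin.val_succ]
        · rw [Fin.le_def]; simp only [Fin.coe_castSucc, Fin.val_succ, Fin.val_zero]; omega
    simp only [hess, Matrix.submatrix_apply, Matrix.of_apply, Fin.val_succ, hv]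
    split_ifs
    all_goals first
    | rfl
    | omega
    | exact ‹False›.elim
    | exact hc' _ _ (by omega)
  rw [e00, e10, s0, s1, Finset.sum_eq_zero (fun i _ => by rw [hz i]; ring)]
  simp
  ring

private theorem b_zero (k : ℕ) (c : ℕ → R) (B : PowerSeries R)
    (hB : (1 - ∑ i ∈ Finset.range k, PowerSeries.C (R := R) (c (i + 1)) * PowerSeries.X ^ (i + 1))
      * B = 1) : PowerSeries.coeff (R := R) 0 B = 1 := by
  have h := congrArg (PowerSeries.constantCoeff (R := R)) hB
  rw [PowerSeries.coeff_zero_eq_constantCoeff]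
  simpa using h

private theorem b_rec (k : ℕ) (c : ℕ → R) (B : PowerSeries R)
    (hc : ∀ m, k + 1 ≤ m → c m = 0)
    (hB : (1 - ∑ i ∈ Finset.range k, PowerSeries.C (R := R) (c (i + 1)) * PowerSeries.X ^ (i + 1))
      * B = 1) (m : ℕ) :
    PowerSeries.coeff (R := R) (m+1) B
      = ∑ t ∈ Finset.range (m+1), c (t+1) * PowerSeries.coeff (R := R) (m - t) B := by
  have h := congrArg (PowerSeries.coeff (R := R) (m+1)) hB
  rw [sub_mul, one_mul, Finset.sum_mul, map_sub, map_sum, PowerSeries.coeff_one,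
    if_neg (Nat.succ_ne_zero m)] at h
  have hterm : ∀ i : ℕ, PowerSeries.coeff (R := R) (m+1)
      (PowerSeries.C (R := R) (c (i+1)) * PowerSeries.X ^ (i+1) * B)
      = c (i+1) * (if i ≤ m then PowerSeries.coeff (R := R) (m - i) B else 0) := by
    intro i
    rw [mul_assoc, PowerSeries.coeff_C_mul, PowerSeries.coeff_X_pow_mul']
    congr 1
    by_cases hi : i ≤ m
    · rw [if_pos (show i+1 ≤ m+1 by omega), if_pos hi,
        show m+1-(i+1) = m - i from by omega]
    · rw [if_neg (show ¬(i+1 ≤ m+1) by omega), if_neg hi]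
  rw [Finset.sum_congr rfl (fun i _ => hterm i)] at h
  have hext : ∑ i ∈ Finset.range k,
      c (i+1) * (if i ≤ m then PowerSeries.coeff (R := R) (m - i) B else 0)
      = ∑ i ∈ Finset.range (k + m + 1),
      c (i+1) * (if i ≤ m then PowerSeries.coeff (R := R) (m - i) B else 0) := by
    apply Finset.sum_subset (Finset.range_subset_range.2 (by omega))
    intro i _ hi
    rw [hc (i+1) (by simp at hi; omega), zero_mul]
  have hext2 : ∑ t ∈ Finset.range (m+1), c (t+1) * PowerSeries.coeff (R := R) (m - t) B
      = ∑ i ∈ Finset.range (k + m + 1),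
      c (i+1) * (if i ≤ m then PowerSeries.coeff (R := R) (m - i) B else 0) := by
    rw [← Finset.sum_subset (Finset.range_subset_range.2 (by omega : m + 1 ≤ k + m + 1))]
    · apply Finset.sum_congr rfl
      intro i hi
      rw [if_pos (by simp at hi; omega)]
    · intro i _ hi
      rw [if_neg (by simp at hi; omega), mul_zero]
  rw [hext] at h
  rw [hext2]
  linear_combination h

private theorem hess_key (k : ℕ) (c : ℕ → R) (B : PowerSeries R)
    (hc : ∀ m, k + 1 ≤ m → c m = 0)
    (hB : (1 - ∑ i ∈ Finset.range k, PowerSeries.C (R := R) (c (i + 1)) * PowerSeries.X ^ (i + 1))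
      * B = 1) :
    ∀ n d : ℕ, (-1 : R) ^ (n+1) * (hess c d (n+1)).det
      = ∑ t ∈ Finset.range (n+1), c (t+1+d) * PowerSeries.coeff (R := R) (n - t) B := by
  intro n
  induction n with
  | zero =>
    intro d
    have : (hess c d 1).det = -c (1 + d) := by
      rw [Matrix.det_fin_one]
      simp only [hess, Matrix.of_apply, Fin.val_zero, if_pos rfl]
      congr 1
    rw [this, Finset.sum_range_one, b_zero k c B hB,
      show (0:ℕ)+1+d = 1+d from by omega]
    ring
  | succ m ih =>
    intro d
    rw [hess_rec]
    have h0 : (-1 : R) ^ (m+1) * (hess c 0 (m+1)).det = PowerSeries.coeff (R := R) (m+1) B := by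
      rw [ih 0, b_rec k c B hc hB m]
    have h1 := ih (d+1)
    rw [Finset.sum_range_succ']
    have goal1 : ∑ t ∈ Finset.range (m+1), c (t+1+1+d) * PowerSeries.coeff (R := R) (m+1-(t+1)) B
        = ∑ t ∈ Finset.range (m+1), c (t+1+(d+1)) * PowerSeries.coeff (R := R) (m-t) B := by
      apply Finset.sum_congr rfl
      intro t _
      rw [show t+1+1+d = t+1+(d+1) from by omega, show m+1-(t+1) = m - t from by omega]
    rw [goal1, ← h1, show (0:ℕ)+1+d = 1+d from by omega, Nat.sub_zero, ← h0]
    ring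
  end Hess

/-- The `n`-th coefficient `b_n` of the inverse power series
`(1 - ∑_{i=1}^k c_i X^i)⁻¹` satisfies `b_n = (-1)^n ⬝ det M`, where `M` is the `n × n`
upper Hessenberg matrix with first row `(-c₁, …, -c_n)`, `1` on the subdiagonal, and
constant values `-c_{j-i+1}` along the diagonals above it (with `c_m = 0` for `m ≥ k+1`). -/
theorem coeff_inverse_eq_det {R : Type*} [CommRing R] (k : ℕ) (hk : 1 ≤ k) (c : ℕ → R)
    (hc : ∀ m, k + 1 ≤ m → c m = 0) (B : PowerSeries R)
    (hB : (1 - ∑ i ∈ Finset.range k, PowerSeries.C (R := R) (c (i + 1)) * PowerSeries.X ^ (i + 1))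
      * B = 1)
    (n : ℕ) (hn : 1 ≤ n) :
    PowerSeries.coeff (R := R) n B =
      (-1) ^ n * Matrix.det (Matrix.of fun i j : Fin n =>
        if (i : ℕ) ≤ j then -c ((j : ℕ) - i + 1)
        else if (j : ℕ) + 1 = i then 1 else 0) := by
  obtain ⟨m, rfl⟩ : ∃ m, n = m + 1 := ⟨n - 1, by omega⟩
  have hM : (Matrix.of fun i j : Fin (m+1) =>
      if (i : ℕ) ≤ j then -c ((j : ℕ) - i + 1)
      else if (j : ℕ) + 1 = i then 1 else 0) = hess c 0 (m+1) := by
    have hc' : ∀ a b : ℕ, a = b → -c a = -c b := fun a b h => by rw [h]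
    ext i j
    simp only [hess, Matrix.of_apply]
    split_ifs
    all_goals first
    | rfl
    | omega
    | exact ‹False›.elim
    | exact hc' _ _ (by omega)
  rw [hM, hess_key k c B hc hB m 0, b_rec k c B hc hB m]
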